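/- Let n be a positive integer and v : ZMod n → ℤ × ℤ a closed lattice polygonal path (the vertices, indexed cyclically). Then the shoelace sum Σ_i [(v i)₁·(v (i+1))₂ − (v i)₂·(v (i+1))₁], which equals twice the signed area enclosed by the path, is congruent modulo 2 to Σ_i Int.gcd((v (i+1))₁ − (v i)₁, (v (i+1))₂ − (v i)₂), the number of lattice points on the boundary counted along the edges. -/

import Mathlib

lemma dvd_cast_two (c : ℤ) (h : (2:ℤ) ∣ c) : ((c : ℤ) : ZMod 2) = 0 :=
  (ZMod.intCast_zmod_eq_zero_iff_dvd _ 2).mpr h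

lemma not_dvd_cast_two (c : ℤ) (h : ¬ (2:ℤ) ∣ c) : ((c : ℤ) : ZMod 2) = 1 := by
  have h1 : c % 2 = 1 := by omega
  have : c = 2 * (c / 2) + 1 := by omega
  rw [this]
  push_cast
  have h2 : (2 : ZMod 2) = 0 := by decide
  rw [h2]; ring

lemma gcd_cast_two (a b : ℤ) :
    ((Int.gcd a b : ℕ) : ZMod 2) = (a : ZMod 2) + b + a * b := by
  have hcast : ((Int.gcd a b : ℕ) : ZMod 2) = ((Int.gcd a b : ℤ) : ZMod 2) := by push_cast; rfl
  rw [hcast]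
  by_cases ha : (2:ℤ) ∣ a
  · by_cases hb : (2:ℤ) ∣ b
    · rw [dvd_cast_two _ (Int.dvd_coe_gcd ha hb), dvd_cast_two _ ha, dvd_cast_two _ hb]; ring
    · have hg : ¬ (2:ℤ) ∣ (Int.gcd a b : ℤ) := fun h => hb (h.trans (Int.gcd_dvd_right a b))
      rw [not_dvd_cast_two _ hg, dvd_cast_two _ ha, not_dvd_cast_two _ hb]; ring
  · have hg : ¬ (2:ℤ) ∣ (Int.gcd a b : ℤ) := fun h => ha (h.trans (Int.gcd_dvd_left a b))
    rw [not_dvd_cast_two _ hg, not_dvd_cast_two _ ha]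
    by_cases hb : (2:ℤ) ∣ b
    · rw [dvd_cast_two _ hb]; ring
    · rw [not_dvd_cast_two _ hb]; decide

theorem shoelace_parity (n : ℕ) [NeZero n] (v : ZMod n → ℤ × ℤ) :
    (∑ i : ZMod n, ((v i).1 * (v (i + 1)).2 - (v i).2 * (v (i + 1)).1)) ≡
      (∑ i : ZMod n,
        (Int.gcd ((v (i + 1)).1 - (v i).1) ((v (i + 1)).2 - (v i).2) : ℤ)) [ZMOD 2] := by
  have : ((2:ℤ)) = ((2:ℕ) : ℤ) := by norm_num
  rw [this, ← ZMod.intCast_eq_intCast_iff]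
  push_cast
  set X : ZMod n → ZMod 2 := fun i => ((v i).1 : ZMod 2) with hX
  set Y : ZMod n → ZMod 2 := fun i => ((v i).2 : ZMod 2) with hY
  have reidx : ∀ F : ZMod n → ZMod 2, ∑ i : ZMod n, F (i + 1) = ∑ i : ZMod n, F i :=
    fun F => Fintype.sum_equiv (Equiv.addRight 1) _ _ (fun i => rfl)
  have key : ∀ a b c d : ZMod 2,
      (c - a) + (d - b) + (c - a) * (d - b)
        = ((c + a) + (d + b) + (c * d + a * b)) + (c * b + a * d) := by decide
  have key2 : ∀ a b c d : ZMod 2, a * d - b * c = c * b + a * d := by decide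
  calc ∑ i : ZMod n, (X i * Y (i+1) - Y i * X (i+1))
      = ∑ i : ZMod n, (X (i+1) * Y i + X i * Y (i+1)) := by
        exact Finset.sum_congr rfl fun i _ => key2 (X i) (Y i) (X (i+1)) (Y (i+1))
    _ = ∑ i : ZMod n, (((X (i+1) + X i) + (Y (i+1) + Y i)
          + (X (i+1) * Y (i+1) + X i * Y i)) + (X (i+1) * Y i + X i * Y (i+1))) := by
        symm
        have hz : ∑ i : ZMod n, ((X (i+1) + X i) + (Y (i+1) + Y i)
            + (X (i+1) * Y (i+1) + X i * Y i)) = 0 := by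
          rw [Finset.sum_add_distrib, Finset.sum_add_distrib, Finset.sum_add_distrib,
            Finset.sum_add_distrib, Finset.sum_add_distrib,
            reidx (fun i => X i), reidx (fun i => Y i), reidx (fun i => X i * Y i)]
          have h2 : ∀ t : ZMod 2, t + t = 0 := by decide
          simp [h2]
        rw [Finset.sum_add_distrib, hz, zero_add]
    _ = ∑ i : ZMod n, ((X (i+1) - X i) + (Y (i+1) - Y i)
          + (X (i+1) - X i) * (Y (i+1) - Y i)) :=
        Finset.sum_congr rfl fun i _ => (key (X i) (Y i) (X (i+1)) (Y (i+1))).symm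
    _ = _ := by
        refine Finset.sum_congr rfl fun i _ => ?_
        rw [gcd_cast_two]
        push_cast
        ring
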